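/- If E ⊆ ℝⁿ is a measurable set and Ω is an open set, then the fractional perimeter Per_σ(E,Ω) := L(E∩Ω, Eᶜ) + L(E\Ω, Ω\E), where L(A,B) = ∫_{A×B} |x−y|^{−(n+σ)} dx dy, is lower semicontinuous with respect to L¹_loc convergence of characteristic functions: if χ_{E_k} → χ_E in L¹(ℝⁿ), then Per_σ(E,Ω) ≤ liminf_k Per_σ(E_k,Ω). -/

import Mathlib

open MeasureTheory Metric Set Filter
open scoped ENNReal symmDiff

noncomputable section

/-- The interaction kernel `L(A,B) = ∫_A ∫_B |x-y|^{-(n+σ)} dy dx`. -/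
def interL (n : ℕ) (σ : ℝ) (A B : Set (EuclideanSpace ℝ (Fin n))) : ℝ≥0∞ :=
  ∫⁻ x in A, ∫⁻ y in B, ENNReal.ofReal (‖x - y‖ ^ (-((n : ℝ) + σ)))

/-- The fractional perimeter `Per_σ(E,Ω) = L(E∩Ω, Eᶜ) + L(E\Ω, Ω\E)`. -/
def fracPer (n : ℕ) (σ : ℝ) (E Ω : Set (EuclideanSpace ℝ (Fin n))) : ℝ≥0∞ :=
  interL n σ (E ∩ Ω) Eᶜ + interL n σ (E \ Ω) (Ω \ E)

/-- The kernel as a function on the product space. -/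
def Kf (n : ℕ) (σ : ℝ) : EuclideanSpace ℝ (Fin n) × EuclideanSpace ℝ (Fin n) → ℝ≥0∞ :=
  fun p => ENNReal.ofReal (‖p.1 - p.2‖ ^ (-((n : ℝ) + σ)))

lemma measurable_Kf (n : ℕ) (σ : ℝ) : Measurable (Kf n σ) := by
  unfold Kf; measurability

/-- The region of integration for the fractional perimeter. -/
def Sset {n : ℕ} (E Ω : Set (EuclideanSpace ℝ (Fin n))) :
    Set (EuclideanSpace ℝ (Fin n) × EuclideanSpace ℝ (Fin n)) :=
  ((E ∩ Ω) ×ˢ Eᶜ) ∪ ((E \ Ω) ×ˢ (Ω \ E))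

lemma measurableSet_Sset {n : ℕ} {E Ω : Set (EuclideanSpace ℝ (Fin n))}
    (hE : MeasurableSet E) (hΩ : MeasurableSet Ω) : MeasurableSet (Sset E Ω) :=
  ((hE.inter hΩ).prod hE.compl).union ((hE.diff hΩ).prod (hΩ.diff hE))

lemma interL_eq_prod {n : ℕ} {σ : ℝ} {A B : Set (EuclideanSpace ℝ (Fin n))} :
    interL n σ A B = ∫⁻ p in A ×ˢ B, Kf n σ p ∂(volume.prod volume) := by
  rw [← Measure.prod_restrict, lintegral_prod _ (measurable_Kf n σ).aemeasurable]
  rfl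

lemma fracPer_eq_prod {n : ℕ} {σ : ℝ} {E Ω : Set (EuclideanSpace ℝ (Fin n))}
    (hE : MeasurableSet E) (hΩ : MeasurableSet Ω) :
    fracPer n σ E Ω = ∫⁻ p in Sset E Ω, Kf n σ p ∂(volume.prod volume) := by
  have hdisj : Disjoint ((E ∩ Ω) ×ˢ Eᶜ) ((E \ Ω) ×ˢ (Ω \ E)) := by
    rw [Set.disjoint_left]
    rintro p hp hq
    exact (Set.mem_prod.1 hq).1.2 (Set.mem_prod.1 hp).1.2
  have hmeas : MeasurableSet ((E \ Ω) ×ˢ (Ω \ E)) := (hE.diff hΩ).prod (hΩ.diff hE)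
  rw [fracPer, interL_eq_prod, interL_eq_prod, Sset, lintegral_union hmeas hdisj]

/-- The a.e. version of lower semicontinuity. -/
lemma fracPer_le_liminf_of_ae {n : ℕ} {σ : ℝ} {Ω : Set (EuclideanSpace ℝ (Fin n))}
    (hΩ : MeasurableSet Ω) {E : Set (EuclideanSpace ℝ (Fin n))} (hE : MeasurableSet E)
    {A : ℕ → Set (EuclideanSpace ℝ (Fin n))} (hA : ∀ k, MeasurableSet (A k))
    (hae : ∀ᵐ x ∂(volume : Measure (EuclideanSpace ℝ (Fin n))),
      ∀ᶠ k in atTop, (x ∈ A k ↔ x ∈ E)) :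
    fracPer n σ E Ω ≤ liminf (fun k => fracPer n σ (A k) Ω) atTop := by
  have hrw : ∀ k, fracPer n σ (A k) Ω
      = ∫⁻ p, (Sset (A k) Ω).indicator (Kf n σ) p ∂(volume.prod volume) := fun k => by
    rw [fracPer_eq_prod (hA k) hΩ, lintegral_indicator (measurableSet_Sset (hA k) hΩ)]
  have hrwE : fracPer n σ E Ω
      = ∫⁻ p, (Sset E Ω).indicator (Kf n σ) p ∂(volume.prod volume) := by
    rw [fracPer_eq_prod hE hΩ, lintegral_indicator (measurableSet_Sset hE hΩ)]
  simp only [hrw, hrwE]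
  -- the a.e. statement on the product space
  have haeprod : ∀ᵐ p ∂((volume : Measure (EuclideanSpace ℝ (Fin n))).prod volume),
      (∀ᶠ k in atTop, (p.1 ∈ A k ↔ p.1 ∈ E)) ∧ (∀ᶠ k in atTop, (p.2 ∈ A k ↔ p.2 ∈ E)) := by
    set T : Set (EuclideanSpace ℝ (Fin n)) :=
      {x | ∀ᶠ k in atTop, (x ∈ A k ↔ x ∈ E)} with hTdef
    have hT : volume Tᶜ = 0 := by
      have := hae
      rw [ae_iff] at this
      convert this using 2
      rfl
    set S := toMeasurable volume Tᶜ with hSdef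
    have hS : volume S = 0 := by rw [hSdef, measure_toMeasurable]; exact hT
    have hTS : Tᶜ ⊆ S := subset_toMeasurable _ _
    have hprod : ((volume : Measure (EuclideanSpace ℝ (Fin n))).prod volume)
        ((S ×ˢ (univ : Set (EuclideanSpace ℝ (Fin n)))) ∪ ((univ : Set (EuclideanSpace ℝ (Fin n))) ×ˢ S)) = 0 := by
      refine measure_union_null ?_ ?_ <;> rw [Measure.prod_prod] <;> simp [hS]
    rw [ae_iff]
    refine measure_mono_null ?_ hprod
    intro p hp
    simp only [Set.mem_setOf_eq, not_and_or] at hp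
    simp only [Set.mem_union, Set.mem_prod, Set.mem_univ, and_true, true_and]
    rcases hp with hp | hp
    · exact Or.inl (hTS (by exact hp))
    · exact Or.inr (hTS (by exact hp))
  calc ∫⁻ p, (Sset E Ω).indicator (Kf n σ) p ∂(volume.prod volume)
      ≤ ∫⁻ p, liminf (fun k => (Sset (A k) Ω).indicator (Kf n σ) p) atTop
          ∂(volume.prod volume) := by
        refine lintegral_mono_ae (haeprod.mono fun p hp => ?_)
        have heq : ∀ᶠ k in atTop,
            (Sset (A k) Ω).indicator (Kf n σ) p = (Sset E Ω).indicator (Kf n σ) p := by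
          filter_upwards [hp.1, hp.2] with k h1 h2
          have hmem : p ∈ Sset (A k) Ω ↔ p ∈ Sset E Ω := by
            simp only [Sset, Set.mem_union, Set.mem_prod, Set.mem_inter_iff, Set.mem_diff,
              Set.mem_compl_iff]
            tauto
          by_cases hps : p ∈ Sset E Ω
          · rw [Set.indicator_of_mem hps, Set.indicator_of_mem (hmem.2 hps)]
          · rw [Set.indicator_of_notMem hps, Set.indicator_of_notMem (fun h => hps (hmem.1 h))]
        have : liminf (fun k => (Sset (A k) Ω).indicator (Kf n σ) p) atTop
            = liminf (fun _ : ℕ => (Sset E Ω).indicator (Kf n σ) p) atTop :=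
          liminf_congr heq
        rw [this, liminf_const]
    _ ≤ liminf (fun k => ∫⁻ p, (Sset (A k) Ω).indicator (Kf n σ) p ∂(volume.prod volume))
          atTop :=
        lintegral_liminf_le fun k => (measurable_Kf n σ).indicator (measurableSet_Sset (hA k) hΩ)

/-- Lower semicontinuity of the fractional perimeter with respect to `L¹`
convergence of characteristic functions. -/
theorem fracPer_lowerSemicontinuous
    (n : ℕ) (hn : 1 ≤ n) (σ : ℝ) (hσ : σ ∈ Set.Ioo (0 : ℝ) 1)
    (Ω : Set (EuclideanSpace ℝ (Fin n))) (hΩ : IsOpen Ω) (hΩb : Bornology.IsBounded Ω)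
    (E : Set (EuclideanSpace ℝ (Fin n))) (hE : MeasurableSet E)
    (Ek : ℕ → Set (EuclideanSpace ℝ (Fin n))) (hEk : ∀ k, MeasurableSet (Ek k))
    (hconv : Tendsto (fun k => volume (Ek k ∆ E)) atTop (nhds 0)) :
    fracPer n σ E Ω ≤ liminf (fun k => fracPer n σ (Ek k) Ω) atTop := by
  by_contra hcon
  rw [not_le] at hcon
  obtain ⟨b, hb1, hb2⟩ := exists_between hcon
  have hfreq : ∃ᶠ k in atTop, fracPer n σ (Ek k) Ω < b := by
    by_contra h
    rw [not_frequently] at h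
    have : b ≤ liminf (fun k => fracPer n σ (Ek k) Ω) atTop :=
      le_liminf_of_le (by isBoundedDefault) (h.mono fun k hk => not_lt.1 hk)
    exact absurd hb1 (not_lt.2 this)
  obtain ⟨φ, hφ, hφlt⟩ := extraction_of_frequently_atTop hfreq
  have hconv' : Tendsto (fun k => volume (Ek (φ k) ∆ E)) atTop (nhds 0) :=
    hconv.comp hφ.tendsto_atTop
  have htim : TendstoInMeasure volume
      (fun k => (Ek (φ k)).indicator (fun _ => (1 : ℝ))) atTop
      (E.indicator fun _ => (1 : ℝ)) := by
    intro ε hε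
    have hle : ∀ k, volume {x | ε ≤ edist ((Ek (φ k)).indicator (fun _ => (1:ℝ)) x)
        (E.indicator (fun _ => (1:ℝ)) x)} ≤ volume (Ek (φ k) ∆ E) := by
      intro k
      apply measure_mono
      intro x hx
      simp only [Set.mem_setOf_eq] at hx
      by_contra hxmem
      rw [Set.mem_symmDiff] at hxmem
      push_neg at hxmem
      have hiff : x ∈ Ek (φ k) ↔ x ∈ E := by tauto
      have : (Ek (φ k)).indicator (fun _ => (1:ℝ)) x = E.indicator (fun _ => (1:ℝ)) x := by
        by_cases hxE : x ∈ E <;> simp [Set.indicator_apply, hiff, hxE]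
      rw [this, edist_self] at hx
      exact absurd (hε.trans_le hx) (lt_irrefl _)
    exact tendsto_of_tendsto_of_tendsto_of_le_of_le tendsto_const_nhds hconv'
      (fun k => zero_le) hle
  obtain ⟨ns, hns, hae⟩ := htim.exists_seq_tendsto_ae
  have hae' : ∀ᵐ x ∂(volume : Measure (EuclideanSpace ℝ (Fin n))),
      ∀ᶠ j in atTop, (x ∈ Ek (φ (ns j)) ↔ x ∈ E) := by
    refine hae.mono fun x hx => ?_
    by_cases hxE : x ∈ E
    · have h1 : E.indicator (fun _ => (1:ℝ)) x = 1 := by simp [hxE]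
      rw [h1] at hx
      refine (hx.eventually_ne (by norm_num : (1:ℝ) ≠ 0)).mono fun j hj => ?_
      constructor
      · intro _; exact hxE
      · intro _
        by_contra hmem
        exact hj (by simp [hmem])
    · have h1 : E.indicator (fun _ => (1:ℝ)) x = 0 := by simp [hxE]
      rw [h1] at hx
      refine (hx.eventually_ne (by norm_num : (0:ℝ) ≠ 1)).mono fun j hj => ?_
      constructor
      · intro hmem
        exact absurd (by simp [hmem]) hj
      · intro h; exact absurd h hxE
  have key := fracPer_le_liminf_of_ae (σ := σ) hΩ.measurableSet hE
    (fun j => hEk (φ (ns j))) hae'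
  have hlim : liminf (fun j => fracPer n σ (Ek (φ (ns j))) Ω) atTop ≤ b := by
    calc liminf (fun j => fracPer n σ (Ek (φ (ns j))) Ω) atTop
        ≤ liminf (fun _ : ℕ => b) atTop :=
          liminf_le_liminf (Eventually.of_forall fun j => (hφlt (ns j)).le)
      _ = b := liminf_const b
  exact absurd (key.trans hlim) (not_le.2 hb2)
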